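/- arXiv:math-ph/0701044 — 6 statements merged into one kernel-verified Lean document; each statement's English description precedes it below -/
import Mathlib

section
/- Let α₁, α₂, λ ∈ ℝ and let x : ℤ×ℤ → ℝ be such that at a given square the four differences x_{n,m}−x_{n+1,m}, x_{n,m+1}−x_{n+1,m+1}, x_{n,m}−x_{n,m+1}, x_{n+1,m}−x_{n+1,m+1} are all nonzero. Define the 2×2 real matrices L_{n,m}(λ) with rows (1, x_{n,m}−x_{n+1,m}) and (λα₁(x_{n,m}−x_{n+1,m})⁻¹, 1), and M_{n,m}(λ) with rows (1, x_{n,m}−x_{n,m+1}) and (λα₂(x_{n,m}−x_{n,m+1})⁻¹, 1). Then the discrete Lax equation L_{n,m+1}(λ)·M_{n,m}(λ) = M_{n+1,m}(λ)·L_{n,m}(λ) holds for all λ ∈ ℝ if and only if Q(x_{n,m}, x_{n+1,m}, x_{n,m+1}, x_{n+1,m+1}) = 0. -/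
/-- The lattice Schwarzian KdV quad polynomial
`Q(a,b,c,d) = α₁ (a−c)(b−d) − α₂ (a−b)(c−d)`. -/
noncomputable def lSKdV_Q (α₁ α₂ a b c d : ℝ) : ℝ :=
  α₁ * (a - c) * (b - d) - α₂ * (a - b) * (c - d)

/-- The Lax matrix with rows `(1, p − q)` and `(λ α (p − q)⁻¹, 1)`; the matrix
`L_{n,m}(λ)` is obtained for `α = α₁`, `p = x_{n,m}`, `q = x_{n+1,m}` and the matrix
`M_{n,m}(λ)` for `α = α₂`, `p = x_{n,m}`, `q = x_{n,m+1}`. -/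
noncomputable def laxMat (α lam p q : ℝ) : Matrix (Fin 2) (Fin 2) ℝ :=
  !![1, p - q; lam * α * (p - q)⁻¹, 1]

/-- at a square with all four edge differences nonzero, the discrete Lax
equation `L_{n,m+1}(λ) M_{n,m}(λ) = M_{n+1,m}(λ) L_{n,m}(λ)` holds for all `λ ∈ ℝ`
iff `Q(x_{n,m}, x_{n+1,m}, x_{n,m+1}, x_{n+1,m+1}) = 0`. -/
theorem lax_compatibility_iff_lSKdV (α₁ α₂ : ℝ) (x : ℤ × ℤ → ℝ) (n m : ℤ)
    (h1 : x (n, m) - x (n + 1, m) ≠ 0)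
    (h2 : x (n, m + 1) - x (n + 1, m + 1) ≠ 0)
    (h3 : x (n, m) - x (n, m + 1) ≠ 0)
    (h4 : x (n + 1, m) - x (n + 1, m + 1) ≠ 0) :
    (∀ lam : ℝ,
        laxMat α₁ lam (x (n, m + 1)) (x (n + 1, m + 1)) *
            laxMat α₂ lam (x (n, m)) (x (n, m + 1)) =
          laxMat α₂ lam (x (n + 1, m)) (x (n + 1, m + 1)) *
            laxMat α₁ lam (x (n, m)) (x (n + 1, m))) ↔
      lSKdV_Q α₁ α₂ (x (n, m)) (x (n + 1, m)) (x (n, m + 1)) (x (n + 1, m + 1)) = 0 := by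
  set a := x (n, m) with ha
  set b := x (n + 1, m) with hb
  set c := x (n, m + 1) with hc
  set d := x (n + 1, m + 1) with hd
  unfold lSKdV_Q laxMat
  constructor
  · intro h
    have h00 := congrFun (congrFun (h 1) 0) 0
    simp [Matrix.mul_apply, Fin.sum_univ_two] at h00
    field_simp at h00
    linear_combination -h00
  · intro hQ lam
    ext i j
    fin_cases i <;> fin_cases j <;>
      simp [Matrix.mul_apply, Fin.sum_univ_two] <;> field_simp
    · linear_combination (-lam) * hQ
    · linear_combination lam * (a - b - c + d) * hQ
    · linear_combination lam * hQ
end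

section
/- Let α₁, α₂ ∈ ℝ and c₀, c₁, c₂ ∈ ℝ, and define Φ(x) := c₀ + c₁x + c₂x². Then for all a, b, c, d ∈ ℝ with Q(a,b,c,d) = 0, the Lie point symmetry determining equation Φ(a)·∂₁Q(a,b,c,d) + Φ(b)·∂₂Q(a,b,c,d) + Φ(c)·∂₃Q(a,b,c,d) + Φ(d)·∂₄Q(a,b,c,d) = 0 holds, where ∂ᵢQ denotes the partial derivative of the polynomial Q with respect to its i-th argument. In particular, the vector fields with characteristics 1, x_{n,m} and x_{n,m}² are Lie point symmetries of the lSKdV equation. -/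
private lemma deriv_linear (k m : ℝ) : deriv (fun t : ℝ => k * t + m) = fun _ => k := by
  funext x
  simpa using (((hasDerivAt_id x).const_mul k).add_const m).deriv

/-- for `Φ(x) := c₀ + c₁ x + c₂ x²`, whenever `Q(a,b,c,d) = 0` the Lie
point symmetry determining equation
`Φ(a) ∂₁Q + Φ(b) ∂₂Q + Φ(c) ∂₃Q + Φ(d) ∂₄Q = 0` holds; in particular the
characteristics `1`, `x_{n,m}`, `x_{n,m}²` are Lie point symmetries of lSKdV. -/
theorem lSKdV_point_symmetries (α₁ α₂ c₀ c₁ c₂ : ℝ) (a b c d : ℝ)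
    (hQ : lSKdV_Q α₁ α₂ a b c d = 0) :
    (c₀ + c₁ * a + c₂ * a ^ 2) * deriv (fun t => lSKdV_Q α₁ α₂ t b c d) a +
        (c₀ + c₁ * b + c₂ * b ^ 2) * deriv (fun t => lSKdV_Q α₁ α₂ a t c d) b +
        (c₀ + c₁ * c + c₂ * c ^ 2) * deriv (fun t => lSKdV_Q α₁ α₂ a b t d) c +
        (c₀ + c₁ * d + c₂ * d ^ 2) * deriv (fun t => lSKdV_Q α₁ α₂ a b c t) d = 0 := by
  have h1 : (fun t => lSKdV_Q α₁ α₂ t b c d)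
      = fun t => (α₁ * (b - d) - α₂ * (c - d)) * t + (-(α₁ * c * (b - d)) + α₂ * b * (c - d)) := by
    funext t; simp only [lSKdV_Q]; ring
  have h2 : (fun t => lSKdV_Q α₁ α₂ a t c d)
      = fun t => (α₁ * (a - c) + α₂ * (c - d)) * t + (-(α₁ * (a - c) * d) - α₂ * a * (c - d)) := by
    funext t; simp only [lSKdV_Q]; ring
  have h3 : (fun t => lSKdV_Q α₁ α₂ a b t d)
      = fun t => (-(α₁ * (b - d)) - α₂ * (a - b)) * t + (α₁ * a * (b - d) + α₂ * (a - b) * d) := by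
    funext t; simp only [lSKdV_Q]; ring
  have h4 : (fun t => lSKdV_Q α₁ α₂ a b c t)
      = fun t => (-(α₁ * (a - c)) + α₂ * (a - b)) * t + (α₁ * (a - c) * b - α₂ * (a - b) * c) := by
    funext t; simp only [lSKdV_Q]; ring
  rw [h1, h2, h3, h4, deriv_linear, deriv_linear, deriv_linear, deriv_linear]
  simp only [lSKdV_Q] at hQ
  linear_combination (2 * c₁ + c₂ * (a + b + c + d)) * hQ
end

section
/- Let α₁, α₂ ∈ ℝ with α₁ ≠ α₂, α₁ ≠ 0 and α₂ ≠ 0. Suppose that for each (n,m) ∈ ℤ², Φ_{n,m} : ℝ → ℝ is a polynomial function, and suppose that for every (n,m) ∈ ℤ² and every (a,b,c) ∈ ℝ³ with α₂(a−b) − α₁(a−c) ≠ 0, letting d be the unique real number with Q(a,b,c,d) = 0, the determining equation Φ_{n,m}(a)·∂₁Q(a,b,c,d) + Φ_{n+1,m}(b)·∂₂Q(a,b,c,d) + Φ_{n,m+1}(c)·∂₃Q(a,b,c,d) + Φ_{n+1,m+1}(d)·∂₄Q(a,b,c,d) = 0 holds. Then there exist constants c₀, c₁, c₂ ∈ ℝ,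 independent of n and m, such that Φ_{n,m}(x) = c₀ + c₁x + c₂x² for all (n,m) ∈ ℤ² and all x ∈ ℝ. Hence the Lie point symmetry algebra of the lSKdV equation is spanned by the characteristics 1, x, x² and is isomorphic to sl(2). -/
open Filter Polynomial Topology

lemma lSKdV_dQ1 (α₁ α₂ a b c d : ℝ) :
    deriv (fun t => lSKdV_Q α₁ α₂ t b c d) a = α₁ * (b - d) - α₂ * (c - d) := by
  have h : HasDerivAt (fun t => lSKdV_Q α₁ α₂ t b c d)
      (α₁ * 1 * (b - d) - α₂ * 1 * (c - d)) a := by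
    simp only [lSKdV_Q]
    exact ((((hasDerivAt_id a).sub_const c).const_mul α₁).mul_const (b - d)).sub
      ((((hasDerivAt_id a).sub_const b).const_mul α₂).mul_const (c - d))
  rw [h.deriv]; ring

lemma lSKdV_dQ2 (α₁ α₂ a b c d : ℝ) :
    deriv (fun t => lSKdV_Q α₁ α₂ a t c d) b = α₁ * (a - c) + α₂ * (c - d) := by
  have h : HasDerivAt (fun t => lSKdV_Q α₁ α₂ a t c d)
      (α₁ * (a - c) * 1 - α₂ * -1 * (c - d)) b := by
    simp only [lSKdV_Q]
    exact (((hasDerivAt_id b).sub_const d).const_mul (α₁ * (a - c))).sub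
      ((((hasDerivAt_id b).const_sub a).const_mul α₂).mul_const (c - d))
  rw [h.deriv]; ring

lemma lSKdV_dQ3 (α₁ α₂ a b c d : ℝ) :
    deriv (fun t => lSKdV_Q α₁ α₂ a b t d) c = -(α₁ * (b - d)) - α₂ * (a - b) := by
  have h : HasDerivAt (fun t => lSKdV_Q α₁ α₂ a b t d)
      (α₁ * -1 * (b - d) - α₂ * (a - b) * 1) c := by
    simp only [lSKdV_Q]
    exact ((((hasDerivAt_id c).const_sub a).const_mul α₁).mul_const (b - d)).sub
      (((hasDerivAt_id c).sub_const d).const_mul (α₂ * (a - b)))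
  rw [h.deriv]; ring

lemma lSKdV_dQ4 (α₁ α₂ a b c d : ℝ) :
    deriv (fun t => lSKdV_Q α₁ α₂ a b c t) d = α₂ * (a - b) - α₁ * (a - c) := by
  have h : HasDerivAt (fun t => lSKdV_Q α₁ α₂ a b c t)
      (α₁ * (a - c) * -1 - α₂ * (a - b) * -1) d := by
    simp only [lSKdV_Q]
    exact (((hasDerivAt_id d).const_sub b).const_mul (α₁ * (a - c))).sub
      (((hasDerivAt_id d).const_sub c).const_mul (α₂ * (a - b)))
  rw [h.deriv]; ring

/-- Degree bound: a polynomial satisfying the (substituted) determining identity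
has degree at most `2`. -/
lemma lSKdV_degree_le (α₁ α₂ : ℝ) (hne : α₁ ≠ α₂) (h1 : α₁ ≠ 0) (h2 : α₂ ≠ 0)
    (p : Polynomial ℝ)
    (hE : ∀ a : ℝ, ((α₂ - α₁) * a - α₂) ≠ 0 →
      p.eval a * (α₁ * (1 - (-α₁*a/((α₂-α₁)*a-α₂))) - α₂ * (0 - (-α₁*a/((α₂-α₁)*a-α₂)))) +
      p.eval 1 * (α₁ * (a - 0) + α₂ * (0 - (-α₁*a/((α₂-α₁)*a-α₂)))) +
      p.eval 0 * (-(α₁ * (1 - (-α₁*a/((α₂-α₁)*a-α₂)))) - α₂ * (a - 1)) +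
      p.eval (-α₁*a/((α₂-α₁)*a-α₂)) * (α₂ * (a - 1) - α₁ * (a - 0)) = 0) :
    p.natDegree ≤ 2 := by
  have hne'' : (α₂ - α₁ : ℝ) ≠ 0 := sub_ne_zero.mpr (Ne.symm hne)
  set K : ℝ × ℝ → ℝ := fun z =>
    (p.eval 1 * (α₁ * (α₂ - α₁)) +
     p.eval 0 * (-α₁^2 * z.1 - (α₁ * z.1 + α₂ - α₂ * z.1) * ((α₂ - α₁) - α₂ * z.1)) +
     z.2 * ((α₂ - α₁) - α₂ * z.1)^2) / (α₁ * α₂) with hK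
  have heq : ∀ a : ℝ, a ≠ 0 → ((α₂ - α₁) * a - α₂) ≠ 0 →
      p.eval a / a^2 = K (a⁻¹, p.eval (-α₁*a/((α₂-α₁)*a-α₂))) := by
    intro a ha hΔ
    have e := hE a hΔ
    set v := p.eval (-α₁*a/((α₂-α₁)*a-α₂)) with hv
    have key : p.eval a / a^2 - K (a⁻¹, v) =
        (-(((α₂-α₁)*a-α₂))/(α₁*α₂*a^2)) *
        (p.eval a * (α₁ * (1 - (-α₁*a/((α₂-α₁)*a-α₂))) - α₂ * (0 - (-α₁*a/((α₂-α₁)*a-α₂)))) +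
        p.eval 1 * (α₁ * (a - 0) + α₂ * (0 - (-α₁*a/((α₂-α₁)*a-α₂)))) +
        p.eval 0 * (-(α₁ * (1 - (-α₁*a/((α₂-α₁)*a-α₂)))) - α₂ * (a - 1)) +
        v * (α₂ * (a - 1) - α₁ * (a - 0))) := by
      rw [hK]
      generalize hD : (α₂-α₁)*a-α₂ = D at hΔ ⊢
      field_simp
      subst hD
      ring
    rw [e, mul_zero, sub_eq_zero] at key
    exact key
  have hdf : Tendsto (fun a : ℝ => -α₁*a/((α₂-α₁)*a-α₂)) atTop (𝓝 (-α₁/(α₂-α₁))) := by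
    have h₁ : Tendsto (fun a : ℝ => (α₂-α₁) - α₂ * a⁻¹) atTop (𝓝 ((α₂-α₁) - α₂*0)) :=
      tendsto_const_nhds.sub (tendsto_const_nhds.mul tendsto_inv_atTop_zero)
    have h₂ : Tendsto (fun a : ℝ => -α₁ / ((α₂-α₁) - α₂ * a⁻¹)) atTop
        (𝓝 (-α₁/((α₂-α₁) - α₂*0))) :=
      tendsto_const_nhds.div h₁ (by simpa using hne'')
    have h₃ : (fun a : ℝ => -α₁ / ((α₂-α₁) - α₂ * a⁻¹)) =ᶠ[atTop]
        (fun a : ℝ => -α₁*a/((α₂-α₁)*a-α₂)) := by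
      filter_upwards [eventually_ne_atTop (0:ℝ)] with a ha
      have h4 : (α₂-α₁) - α₂ * a⁻¹ = ((α₂-α₁)*a - α₂)/a := by field_simp
      rw [h4, div_div_eq_mul_div]
    simpa using h₂.congr' h₃
  have hvt : Tendsto (fun a : ℝ => p.eval (-α₁*a/((α₂-α₁)*a-α₂))) atTop
      (𝓝 (p.eval (-α₁/(α₂-α₁)))) := (p.continuous.tendsto _).comp hdf
  have hKc : Continuous K := by rw [hK]; fun_prop
  have hTen : Tendsto (fun a : ℝ => K (a⁻¹, p.eval (-α₁*a/((α₂-α₁)*a-α₂)))) atTop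
      (𝓝 (K (0, p.eval (-α₁/(α₂-α₁))))) :=
    (hKc.tendsto _).comp (tendsto_inv_atTop_zero.prodMk_nhds hvt)
  have hfin : Tendsto (fun a : ℝ => p.eval a / a^2) atTop
      (𝓝 (K (0, p.eval (-α₁/(α₂-α₁))))) := by
    apply hTen.congr'
    filter_upwards [eventually_ne_atTop (0:ℝ), eventually_ne_atTop (α₂/(α₂-α₁))] with a ha hb
    have hΔ : (α₂-α₁)*a - α₂ ≠ 0 := by
      intro h
      apply hb
      rw [eq_div_iff hne'']
      linarith [h]
    exact (heq a ha hΔ).symm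
  by_contra hdeg
  push_neg at hdeg
  have hp0 : p ≠ 0 := by
    intro h
    rw [h] at hdeg
    simp at hdeg
  have hlt : (X^2 : ℝ[X]).degree < p.degree := by
    rw [degree_X_pow, degree_eq_natDegree hp0]
    exact_mod_cast hdeg
  have habs := Polynomial.abs_div_tendsto_atTop_of_degree_gt p (X^2) hlt
    (pow_ne_zero 2 X_ne_zero)
  simp only [eval_pow, eval_X] at habs
  exact not_tendsto_atTop_of_tendsto_nhds hfin.abs habs

/-- if `α₁ ≠ α₂`, `α₁ ≠ 0`, `α₂ ≠ 0`, and polynomial characteristics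
`Φ_{n,m}` satisfy the Lie point symmetry determining equation on the solution set of
`Q = 0` (with `d` the unique solution of `Q(a,b,c,d) = 0` whenever
`α₂(a−b) − α₁(a−c) ≠ 0`), then `Φ_{n,m}(x) = c₀ + c₁ x + c₂ x²` for constants
`c₀, c₁, c₂` independent of `n` and `m`: the Lie point symmetry algebra is spanned
by the characteristics `1, x, x²` (and so is isomorphic to `sl(2)`). -/
theorem lSKdV_point_symmetry_classification (α₁ α₂ : ℝ)
    (hne : α₁ ≠ α₂) (h1 : α₁ ≠ 0) (h2 : α₂ ≠ 0)
    (Φ : ℤ → ℤ → ℝ → ℝ)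
    (hpoly : ∀ n m : ℤ, ∃ p : Polynomial ℝ, ∀ x : ℝ, Φ n m x = p.eval x)
    (hdet : ∀ n m : ℤ, ∀ a b c d : ℝ,
      α₂ * (a - b) - α₁ * (a - c) ≠ 0 →
      lSKdV_Q α₁ α₂ a b c d = 0 →
      Φ n m a * deriv (fun t => lSKdV_Q α₁ α₂ t b c d) a +
          Φ (n + 1) m b * deriv (fun t => lSKdV_Q α₁ α₂ a t c d) b +
          Φ n (m + 1) c * deriv (fun t => lSKdV_Q α₁ α₂ a b t d) c +
          Φ (n + 1) (m + 1) d * deriv (fun t => lSKdV_Q α₁ α₂ a b c t) d = 0) :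
    ∃ c₀ c₁ c₂ : ℝ, ∀ n m : ℤ, ∀ x : ℝ, Φ n m x = c₀ + c₁ * x + c₂ * x ^ 2 := by
  have hne' : (α₁ - α₂ : ℝ) ≠ 0 := sub_ne_zero.mpr hne
  have hne'' : (α₂ - α₁ : ℝ) ≠ 0 := sub_ne_zero.mpr (Ne.symm hne)
  -- Step A: all four corner values agree
  have hshift : ∀ n m : ℤ, ∀ x : ℝ, Φ (n+1) m x = Φ n m x ∧ Φ n (m+1) x = Φ n m x := by
    intro n m x
    have hQ1 : lSKdV_Q α₁ α₂ (x+1) x x x = 0 := by simp only [lSKdV_Q]; ring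
    have hQ2 : lSKdV_Q α₁ α₂ x x (x+1) x = 0 := by simp only [lSKdV_Q]; ring
    have hQ3 : lSKdV_Q α₁ α₂ x (x+1) x x = 0 := by simp only [lSKdV_Q]; ring
    have hD1 : α₂ * ((x+1) - x) - α₁ * ((x+1) - x) ≠ 0 := by
      have h : α₂ * ((x+1) - x) - α₁ * ((x+1) - x) = α₂ - α₁ := by ring
      rw [h]; exact hne''
    have hD2 : α₂ * (x - x) - α₁ * (x - (x+1)) ≠ 0 := by
      have h : α₂ * (x - x) - α₁ * (x - (x+1)) = α₁ := by ring
      rw [h]; exact h1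
    have hD3 : α₂ * (x - (x+1)) - α₁ * (x - x) ≠ 0 := by
      have h : α₂ * (x - (x+1)) - α₁ * (x - x) = -α₂ := by ring
      rw [h]; exact neg_ne_zero.mpr h2
    have e1 := hdet n m (x+1) x x x hD1 hQ1
    have e2 := hdet n m x x (x+1) x hD2 hQ2
    have e3 := hdet n m x (x+1) x x hD3 hQ3
    rw [lSKdV_dQ1, lSKdV_dQ2, lSKdV_dQ3, lSKdV_dQ4] at e1 e2 e3
    have hS : 2 * α₁ * α₂ * (Φ n m x - Φ (n+1) (m+1) x) = 0 := by
      linear_combination (-α₁) * e2 + α₂ * e3 + (α₂ - α₁) * e1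
    have h20 : (2 * α₁ * α₂ : ℝ) ≠ 0 := mul_ne_zero (mul_ne_zero two_ne_zero h1) h2
    have hS' : Φ (n+1) (m+1) x = Φ n m x := by
      have h := (mul_eq_zero.mp hS).resolve_left h20
      linarith [sub_eq_zero.mp h]
    have hQv : (α₁ - α₂) * (Φ (n+1) m x - Φ n m x) = 0 := by
      linear_combination (-1) * e2 + α₁ * hS'
    have hRv : (α₂ - α₁) * (Φ n (m+1) x - Φ n m x) = 0 := by
      linear_combination e3 + α₂ * hS'
    constructor
    · have h := (mul_eq_zero.mp hQv).resolve_left hne'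
      linarith [sub_eq_zero.mp h]
    · have h := (mul_eq_zero.mp hRv).resolve_left hne''
      linarith [sub_eq_zero.mp h]
  -- Step B: all characteristics coincide with Φ 0 0
  have hrow : ∀ n : ℤ, ∀ m : ℤ, ∀ x : ℝ, Φ n m x = Φ 0 m x := by
    intro n
    induction n using Int.induction_on with
    | zero => intro m x; rfl
    | succ k ih => intro m x; rw [(hshift k m x).1, ih m x]
    | pred k ih =>
      intro m x
      have h := (hshift (-(k:ℤ) - 1) m x).1
      rw [show (-(k:ℤ) - 1 + 1 : ℤ) = -k from by ring] at h
      rw [← h]; exact ih m x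
  have hcol : ∀ m : ℤ, ∀ x : ℝ, Φ 0 m x = Φ 0 0 x := by
    intro m
    induction m using Int.induction_on with
    | zero => intro x; rfl
    | succ k ih => intro x; rw [(hshift 0 k x).2, ih x]
    | pred k ih =>
      intro x
      have h := (hshift 0 (-(k:ℤ) - 1) x).2
      rw [show (-(k:ℤ) - 1 + 1 : ℤ) = -k from by ring] at h
      rw [← h]; exact ih x
  obtain ⟨p, hp⟩ := hpoly 0 0
  have hall : ∀ n m : ℤ, ∀ x : ℝ, Φ n m x = p.eval x := by
    intro n m x
    rw [hrow n m x, hcol m x, hp x]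
  -- Step C: degree bound
  have hE : ∀ a : ℝ, ((α₂ - α₁) * a - α₂) ≠ 0 →
      p.eval a * (α₁ * (1 - (-α₁*a/((α₂-α₁)*a-α₂))) - α₂ * (0 - (-α₁*a/((α₂-α₁)*a-α₂)))) +
      p.eval 1 * (α₁ * (a - 0) + α₂ * (0 - (-α₁*a/((α₂-α₁)*a-α₂)))) +
      p.eval 0 * (-(α₁ * (1 - (-α₁*a/((α₂-α₁)*a-α₂)))) - α₂ * (a - 1)) +
      p.eval (-α₁*a/((α₂-α₁)*a-α₂)) * (α₂ * (a - 1) - α₁ * (a - 0)) = 0 := by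
    intro a hΔ
    have hΔ' : α₂ * (a - 1) - α₁ * (a - 0) ≠ 0 := by
      have h : α₂ * (a - 1) - α₁ * (a - 0) = (α₂ - α₁) * a - α₂ := by ring
      rw [h]; exact hΔ
    have hQ : lSKdV_Q α₁ α₂ a 1 0 (-α₁*a/((α₂-α₁)*a-α₂)) = 0 := by
      simp only [lSKdV_Q]
      generalize hD : (α₂-α₁)*a-α₂ = D at hΔ ⊢
      field_simp
      subst hD
      ring
    have e := hdet 0 0 a 1 0 (-α₁*a/((α₂-α₁)*a-α₂)) hΔ' hQ
    rw [lSKdV_dQ1, lSKdV_dQ2, lSKdV_dQ3, lSKdV_dQ4] at e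
    simp only [hall] at e
    linear_combination e
  have hdeg : p.natDegree ≤ 2 := lSKdV_degree_le α₁ α₂ hne h1 h2 p hE
  refine ⟨p.coeff 0, p.coeff 1, p.coeff 2, ?_⟩
  intro n m x
  rw [hall n m x, Polynomial.eval_eq_sum_range' (Nat.lt_succ_of_le hdeg) x]
  rw [Finset.sum_range_succ, Finset.sum_range_succ, Finset.sum_range_one]
  ring
end

section
/- Let α₀ ∈ ℝ. There exists a nonzero constant κ ∈ ℝ such that the following holds. Let u : ℤ → (ℝ → ℝ) be a family of differentiable functions t ↦ u_n(t) satisfying for all n and t: u_{n+1}(t) − u_{n−1}(t) + 2α₀ ≠ 0, u_{n+2}(t) − u_n(t) + 2α₀ ≠ 0, and the differential-difference equation du_n/dt = 4(u_n − u_{n−1} + α₀)(u_n − u_{n+1} − α₀)/(u_{n+1} − u_{n−1} + 2α₀). Define a_n(t) := 4(u_{n+1} − u_n + α₀)² / ((u_{n+2} − u_n + 2α₀)(u_{n+1} − u_{n−1} + 2α₀)). Then a_n satisfies the Volterra equation da_n/dt = κ·a_n·(a_{n+1} − a_{n−1}) for all n and t. -/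
set_option maxHeartbeats 1000000 in
private lemma volterra_key2 (p q r s w : ℝ)
    (hpq : p+q ≠ 0) (hqr : q+r ≠ 0) (hrs : r+s ≠ 0) (hsw : s+w ≠ 0) :
    (8*r*(-4*r*s/(r+s) + 4*q*r/(q+r)) * ((r+s)*(q+r))
      - 4*r^2 * ((-4*s*w/(s+w) + 4*q*r/(q+r))*(q+r) + (r+s)*(-4*r*s/(r+s) + 4*p*q/(p+q))))
      / ((r+s)*(q+r))^2
    = -1 * (4*r^2/((r+s)*(q+r)))
        * (4*s^2/((s+w)*(r+s)) - 4*q^2/((q+r)*(p+q))) := by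
  field_simp
  ring

set_option maxHeartbeats 1000000 in
private lemma volterra_key (α a b c d e f : ℝ)
    (hA : c - a + 2*α ≠ 0) (hB : d - b + 2*α ≠ 0)
    (hC : e - c + 2*α ≠ 0) (hD : f - d + 2*α ≠ 0) :
    (8*(d-c+α)*(4*(d-c+α)*(d-e-α)/(e-c+2*α) - 4*(c-b+α)*(c-d-α)/(d-b+2*α))
        * ((e-c+2*α)*(d-b+2*α))
      - 4*(d-c+α)^2 *
        ((4*(e-d+α)*(e-f-α)/(f-d+2*α) - 4*(c-b+α)*(c-d-α)/(d-b+2*α))*(d-b+2*α)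
          + (e-c+2*α)*(4*(d-c+α)*(d-e-α)/(e-c+2*α) - 4*(b-a+α)*(b-c-α)/(c-a+2*α))))
      / ((e-c+2*α)*(d-b+2*α))^2
    = -1 * (4*(d-c+α)^2/((e-c+2*α)*(d-b+2*α)))
        * (4*(e-d+α)^2/((f-d+2*α)*(e-c+2*α)) - 4*(c-b+α)^2/((d-b+2*α)*(c-a+2*α))) := by
  have h := volterra_key2 (b-a+α) (c-b+α) (d-c+α) (e-d+α) (f-e+α)
    (fun h => hA (by linarith)) (fun h => hB (by linarith))
    (fun h => hC (by linarith)) (fun h => hD (by linarith))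
  linear_combination h



/-- The Miura transformation
`a_n(t) := 4 (u_{n+1} − u_n + α₀)² / ((u_{n+2} − u_n + 2α₀)(u_{n+1} − u_{n−1} + 2α₀))`. -/
noncomputable def miura (α₀ : ℝ) (u : ℤ → ℝ → ℝ) (n : ℤ) (t : ℝ) : ℝ :=
  4 * (u (n + 1) t - u n t + α₀) ^ 2 /
    ((u (n + 2) t - u n t + 2 * α₀) * (u (n + 1) t - u (n - 1) t + 2 * α₀))

set_option maxHeartbeats 2000000 in
/-- there is a nonzero constant `κ` such that for every differentiable
family `u_n(t)` with nonvanishing denominators satisfying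
`du_n/dt = 4 (u_n − u_{n−1} + α₀)(u_n − u_{n+1} − α₀)/(u_{n+1} − u_{n−1} + 2α₀)`,
the Miura-transformed field `a_n` satisfies the Volterra equation
`da_n/dt = κ a_n (a_{n+1} − a_{n−1})`. -/
theorem miura_maps_volterra_flow (α₀ : ℝ) :
    ∃ κ : ℝ, κ ≠ 0 ∧
      ∀ u : ℤ → ℝ → ℝ,
        (∀ n : ℤ, Differentiable ℝ (u n)) →
        (∀ (n : ℤ) (t : ℝ), u (n + 1) t - u (n - 1) t + 2 * α₀ ≠ 0) →
        (∀ (n : ℤ) (t : ℝ), u (n + 2) t - u n t + 2 * α₀ ≠ 0) →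
        (∀ (n : ℤ) (t : ℝ),
          deriv (u n) t =
            4 * (u n t - u (n - 1) t + α₀) * (u n t - u (n + 1) t - α₀) /
              (u (n + 1) t - u (n - 1) t + 2 * α₀)) →
        ∀ (n : ℤ) (t : ℝ),
          deriv (miura α₀ u n) t =
            κ * miura α₀ u n t * (miura α₀ u (n + 1) t - miura α₀ u (n - 1) t) := by
  refine ⟨-1, by norm_num, ?_⟩
  intro u hdiff h1 h2 hflow n t
  have hu : ∀ k : ℤ, HasDerivAt (u k) (deriv (u k) t) t :=
    fun k => (hdiff k t).hasDerivAt
  -- numerator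
  have hN : HasDerivAt (fun τ => 4 * (u (n + 1) τ - u n τ + α₀) ^ 2)
      (4 * ((2 : ℕ) * (u (n + 1) t - u n t + α₀) ^ 1 *
        (deriv (u (n + 1)) t - deriv (u n) t))) t := by
    exact (((hu (n + 1)).sub (hu n)).add_const α₀).pow 2 |>.const_mul 4
  -- denominator
  have hD : HasDerivAt
      (fun τ => (u (n + 2) τ - u n τ + 2 * α₀) * (u (n + 1) τ - u (n - 1) τ + 2 * α₀))
      ((deriv (u (n + 2)) t - deriv (u n) t) * (u (n + 1) t - u (n - 1) t + 2 * α₀)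
        + (u (n + 2) t - u n t + 2 * α₀) * (deriv (u (n + 1)) t - deriv (u (n - 1)) t)) t := by
    exact (((hu (n + 2)).sub (hu n)).add_const (2 * α₀)).mul
      (((hu (n + 1)).sub (hu (n - 1))).add_const (2 * α₀))
  have hden : (u (n + 2) t - u n t + 2 * α₀) * (u (n + 1) t - u (n - 1) t + 2 * α₀) ≠ 0 :=
    mul_ne_zero (h2 n t) (h1 n t)
  have hder := (hN.div hD hden).deriv
  have hmi : deriv (miura α₀ u n) t =
      (4 * ((2 : ℕ) * (u (n + 1) t - u n t + α₀) ^ 1 *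
          (deriv (u (n + 1)) t - deriv (u n) t)) *
        ((u (n + 2) t - u n t + 2 * α₀) * (u (n + 1) t - u (n - 1) t + 2 * α₀))
        - 4 * (u (n + 1) t - u n t + α₀) ^ 2 *
          ((deriv (u (n + 2)) t - deriv (u n) t) * (u (n + 1) t - u (n - 1) t + 2 * α₀)
            + (u (n + 2) t - u n t + 2 * α₀) * (deriv (u (n + 1)) t - deriv (u (n - 1)) t)))
        / ((u (n + 2) t - u n t + 2 * α₀) * (u (n + 1) t - u (n - 1) t + 2 * α₀)) ^ 2 := by
    rw [← hder]
    rfl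
  rw [hmi]
  -- flow formulas with normalized indices
  have fn : deriv (u n) t = 4 * (u n t - u (n - 1) t + α₀) * (u n t - u (n + 1) t - α₀) /
      (u (n + 1) t - u (n - 1) t + 2 * α₀) := hflow n t
  have fn1 : deriv (u (n + 1)) t =
      4 * (u (n + 1) t - u n t + α₀) * (u (n + 1) t - u (n + 2) t - α₀) /
      (u (n + 2) t - u n t + 2 * α₀) := by
    have := hflow (n + 1) t
    rw [show n + 1 - 1 = n from by ring, show n + 1 + 1 = n + 2 from by ring] at this
    exact this
  have fn2 : deriv (u (n + 2)) t =
      4 * (u (n + 2) t - u (n + 1) t + α₀) * (u (n + 2) t - u (n + 3) t - α₀) /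
      (u (n + 3) t - u (n + 1) t + 2 * α₀) := by
    have := hflow (n + 2) t
    rw [show n + 2 - 1 = n + 1 from by ring, show n + 2 + 1 = n + 3 from by ring] at this
    exact this
  have fm1 : deriv (u (n - 1)) t =
      4 * (u (n - 1) t - u (n - 2) t + α₀) * (u (n - 1) t - u n t - α₀) /
      (u n t - u (n - 2) t + 2 * α₀) := by
    have := hflow (n - 1) t
    rw [show n - 1 - 1 = n - 2 from by ring, show n - 1 + 1 = n from by ring] at this
    exact this
  rw [fn, fn1, fn2, fm1]
  -- unfold miura on the RHS with normalized indices
  have m0 : miura α₀ u n t = 4 * (u (n + 1) t - u n t + α₀) ^ 2 /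
      ((u (n + 2) t - u n t + 2 * α₀) * (u (n + 1) t - u (n - 1) t + 2 * α₀)) := rfl
  have mp : miura α₀ u (n + 1) t = 4 * (u (n + 2) t - u (n + 1) t + α₀) ^ 2 /
      ((u (n + 3) t - u (n + 1) t + 2 * α₀) * (u (n + 2) t - u n t + 2 * α₀)) := by
    unfold miura
    rw [show n + 1 + 1 = n + 2 from by ring, show n + 1 + 2 = n + 3 from by ring,
        show n + 1 - 1 = n from by ring]
  have mm : miura α₀ u (n - 1) t = 4 * (u n t - u (n - 1) t + α₀) ^ 2 /
      ((u (n + 1) t - u (n - 1) t + 2 * α₀) * (u n t - u (n - 2) t + 2 * α₀)) := by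
    unfold miura
    rw [show n - 1 + 1 = n from by ring, show n - 1 + 2 = n + 1 from by ring,
        show n - 1 - 1 = n - 2 from by ring]
  rw [m0, mp, mm]
  -- nonvanishing denominators with normalized indices
  have hA : u n t - u (n - 2) t + 2 * α₀ ≠ 0 := by
    have := h1 (n - 1) t
    rwa [show n - 1 + 1 = n from by ring, show n - 1 - 1 = n - 2 from by ring] at this
  have hB : u (n + 1) t - u (n - 1) t + 2 * α₀ ≠ 0 := h1 n t
  have hC : u (n + 2) t - u n t + 2 * α₀ ≠ 0 := h2 n t
  have hD' : u (n + 3) t - u (n + 1) t + 2 * α₀ ≠ 0 := by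
    have := h1 (n + 2) t
    rwa [show n + 2 + 1 = n + 3 from by ring, show n + 2 - 1 = n + 1 from by ring] at this
  have key := volterra_key α₀ (u (n - 2) t) (u (n - 1) t) (u n t) (u (n + 1) t)
    (u (n + 2) t) (u (n + 3) t) hA hB hC hD'
  push_cast
  linear_combination key
end

section
/- Let (α₁,α₂) ↦ q(·,·,·,·;α₁,α₂) be a family of differentiable functions ℝ⁴ → ℝ satisfying the swap antisymmetry q(a,c,b,d;α₂,α₁) = −q(a,b,c,d;α₁,α₂) for all a,b,c,d (as holds for the lSKdV quad polynomial). For each (α₁,α₂) let Z[·;α₁,α₂] and g[·;α₁,α₂] assign to every field u : ℤ×ℤ→ℝ a field ℤ×ℤ→ℝ, and let a(α₁,α₂) be nonzero constants such that: (i) g has the equivariance g[Su;α₂,α₁](m,n) = g[u;α₁,α₂](n,m) for all u and (n,m), where (Su)(n,m) := u(m,n); and (ii) for every pair of parameters and every field u solving q(u_{n,m},u_{n+1,m},u_{n,m+1},u_{n+1,m+1};α₁,α₂) = 0 for all (n,m), the prolongation (pr Z q)[u](n,m) := Σ_{(i,j)∈{0,1}²} Z[u;α₁,α₂](n+i,m+j)·∂_{(i,j)}q(u_{n,m},u_{n+1,m},u_{n,m+1},u_{n+1,m+1};α₁,α₂)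 equals a(α₁,α₂)·g[u;α₁,α₂](n,m), where ∂_{(0,0)},∂_{(1,0)},∂_{(0,1)},∂_{(1,1)} denote the partial derivatives of q in its first through fourth arguments. Define Z*[u;α₁,α₂](n,m) := Z[Su;α₂,α₁](m,n). Then for every field u solving the quad equation with parameters (α₁,α₂): (pr Z* q)[u] = −a(α₂,α₁)·g[u;α₁,α₂], and consequently the combined characteristic W[u] := (1/a(α₁,α₂))·Z[u;α₁,α₂] + (1/a(α₂,α₁))·Z*[u;α₁,α₂] satisfies (pr W q)[u](n,m) = 0 for all (n,m), i.e. W is a generalized symmetry of the quad equation. -/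
/-- The prolongation of an evolutionary vector field with characteristic values `Zu`
acting on the quad function `q` (with parameters `α₁, α₂`) at the field `u`, at the
point `(n,m)`:
`(pr Z q)[u](n,m) = Σ_{(i,j)∈{0,1}²} Zu(n+i,m+j) ∂_{(i,j)}q`, the partial derivatives
of `q` in its four arguments being evaluated at the quad
`(u_{n,m}, u_{n+1,m}, u_{n,m+1}, u_{n+1,m+1})`. -/
noncomputable def quadProl (q : ℝ → ℝ → ℝ → ℝ → ℝ → ℝ → ℝ) (α₁ α₂ : ℝ)
    (Zu u : ℤ × ℤ → ℝ) (n m : ℤ) : ℝ :=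
  Zu (n, m) *
      deriv (fun t => q α₁ α₂ t (u (n + 1, m)) (u (n, m + 1)) (u (n + 1, m + 1))) (u (n, m)) +
    Zu (n + 1, m) *
      deriv (fun t => q α₁ α₂ (u (n, m)) t (u (n, m + 1)) (u (n + 1, m + 1))) (u (n + 1, m)) +
    Zu (n, m + 1) *
      deriv (fun t => q α₁ α₂ (u (n, m)) (u (n + 1, m)) t (u (n + 1, m + 1))) (u (n, m + 1)) +
    Zu (n + 1, m + 1) *
      deriv (fun t => q α₁ α₂ (u (n, m)) (u (n + 1, m)) (u (n, m + 1)) t) (u (n + 1, m + 1))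

/-- for a family of differentiable quad functions `q` with the swap
antisymmetry `q(a,c,b,d;α₂,α₁) = −q(a,b,c,d;α₁,α₂)`, characteristics `Z`,
fields `g` with the swap equivariance `g[Su;α₂,α₁](m,n) = g[u;α₁,α₂](n,m)`, and
nonzero constants `a(α₁,α₂)` such that `(pr Z q)[u] = a(α₁,α₂)·g[u;α₁,α₂]` on
solutions, the swapped characteristic `Z*[u;α₁,α₂](n,m) := Z[Su;α₂,α₁](m,n)`
satisfies `(pr Z* q)[u] = −a(α₂,α₁)·g[u;α₁,α₂]` on solutions, and hence
`W := (1/a(α₁,α₂))·Z + (1/a(α₂,α₁))·Z*` is a generalized symmetry: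
`(pr W q)[u] = 0` on solutions. -/
theorem swap_combined_generalized_symmetry
    (q : ℝ → ℝ → ℝ → ℝ → ℝ → ℝ → ℝ)
    (hdiff : ∀ α₁ α₂ : ℝ,
      Differentiable ℝ (fun p : ℝ × ℝ × ℝ × ℝ => q α₁ α₂ p.1 p.2.1 p.2.2.1 p.2.2.2))
    (hanti : ∀ α₁ α₂ a b c d : ℝ, q α₂ α₁ a c b d = -q α₁ α₂ a b c d)
    (Z g : ℝ → ℝ → (ℤ × ℤ → ℝ) → ℤ × ℤ → ℝ)
    (aconst : ℝ → ℝ → ℝ) (ha : ∀ α₁ α₂ : ℝ, aconst α₁ α₂ ≠ 0)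
    (hequiv : ∀ (α₁ α₂ : ℝ) (u : ℤ × ℤ → ℝ) (n m : ℤ),
      g α₂ α₁ (fun p => u (p.2, p.1)) (m, n) = g α₁ α₂ u (n, m))
    (hprZ : ∀ (α₁ α₂ : ℝ) (u : ℤ × ℤ → ℝ),
      (∀ n m : ℤ,
        q α₁ α₂ (u (n, m)) (u (n + 1, m)) (u (n, m + 1)) (u (n + 1, m + 1)) = 0) →
      ∀ n m : ℤ,
        quadProl q α₁ α₂ (Z α₁ α₂ u) u n m = aconst α₁ α₂ * g α₁ α₂ u (n, m)) :
    ∀ (α₁ α₂ : ℝ) (u : ℤ × ℤ → ℝ),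
      (∀ n m : ℤ,
        q α₁ α₂ (u (n, m)) (u (n + 1, m)) (u (n, m + 1)) (u (n + 1, m + 1)) = 0) →
      (∀ n m : ℤ,
        quadProl q α₁ α₂ (fun p => Z α₂ α₁ (fun r => u (r.2, r.1)) (p.2, p.1)) u n m =
          -aconst α₂ α₁ * g α₁ α₂ u (n, m)) ∧
      (∀ n m : ℤ,
        quadProl q α₁ α₂
          (fun p => (1 / aconst α₁ α₂) * Z α₁ α₂ u p +
            (1 / aconst α₂ α₁) * Z α₂ α₁ (fun r => u (r.2, r.1)) (p.2, p.1)) u n m = 0) := by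
  intro α₁ α₂ u hsol
  set v : ℤ × ℤ → ℝ := fun r => u (r.2, r.1) with hv
  have hsolv : ∀ n m : ℤ,
      q α₂ α₁ (v (n, m)) (v (n + 1, m)) (v (n, m + 1)) (v (n + 1, m + 1)) = 0 := by
    intro n m
    simp only [hv]
    rw [hanti]
    simpa using hsol m n
  -- derivative swap lemmas
  have d1 : ∀ b c d x : ℝ, deriv (fun t => q α₂ α₁ t c b d) x =
      -deriv (fun t => q α₁ α₂ t b c d) x := by
    intro b c d x
    have : (fun t => q α₂ α₁ t c b d) = fun t => -(q α₁ α₂ t b c d) :=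
      funext fun t => hanti α₁ α₂ t b c d
    rw [this, deriv.fun_neg]
  have d2 : ∀ a c d x : ℝ, deriv (fun t => q α₂ α₁ a t c d) x =
      -deriv (fun t => q α₁ α₂ a c t d) x := by
    intro a c d x
    have : (fun t => q α₂ α₁ a t c d) = fun t => -(q α₁ α₂ a c t d) :=
      funext fun t => hanti α₁ α₂ a c t d
    rw [this, deriv.fun_neg]
  have d3 : ∀ a b d x : ℝ, deriv (fun t => q α₂ α₁ a b t d) x =
      -deriv (fun t => q α₁ α₂ a t b d) x := by
    intro a b d x
    have : (fun t => q α₂ α₁ a b t d) = fun t => -(q α₁ α₂ a t b d) :=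
      funext fun t => hanti α₁ α₂ a t b d
    rw [this, deriv.fun_neg]
  have d4 : ∀ a b c x : ℝ, deriv (fun t => q α₂ α₁ a b c t) x =
      -deriv (fun t => q α₁ α₂ a c b t) x := by
    intro a b c x
    have : (fun t => q α₂ α₁ a b c t) = fun t => -(q α₁ α₂ a c b t) :=
      funext fun t => hanti α₁ α₂ a c b t
    rw [this, deriv.fun_neg]
  have key : ∀ n m : ℤ,
      quadProl q α₁ α₂ (fun p => Z α₂ α₁ v (p.2, p.1)) u n m =
        -quadProl q α₂ α₁ (Z α₂ α₁ v) v m n := by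
    intro n m
    unfold quadProl
    simp only [hv]
    rw [d1, d2, d3, d4]
    ring
  have hstar : ∀ n m : ℤ,
      quadProl q α₁ α₂ (fun p => Z α₂ α₁ v (p.2, p.1)) u n m =
        -aconst α₂ α₁ * g α₁ α₂ u (n, m) := by
    intro n m
    rw [key n m, hprZ α₂ α₁ v hsolv m n]
    have := hequiv α₁ α₂ u n m
    simp only [hv]
    rw [this]
    ring
  refine ⟨hstar, ?_⟩
  intro n m
  have hlin : quadProl q α₁ α₂
      (fun p => (1 / aconst α₁ α₂) * Z α₁ α₂ u p +
        (1 / aconst α₂ α₁) * Z α₂ α₁ v (p.2, p.1)) u n m =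
      (1 / aconst α₁ α₂) * quadProl q α₁ α₂ (Z α₁ α₂ u) u n m +
        (1 / aconst α₂ α₁) * quadProl q α₁ α₂ (fun p => Z α₂ α₁ v (p.2, p.1)) u n m := by
    unfold quadProl
    ring
  rw [hlin, hprZ α₁ α₂ u hsol n m, hstar n m]
  field_simp [ha α₁ α₂, ha α₂ α₁]
  ring
end

section
/- There exist parameters α₁, α₂, α₀, β₀ ∈ ℝ with α₁β₀² = α₂α₀² and β₀ ≠ 0, a field u : ℤ×ℤ → ℝ solving the transformed lSKdV equation for all (n,m), and a point (n,m) ∈ ℤ², such that for the characteristic Φ_{n,m} := u_{n,m} + α₀·n the symmetry determining expression Φ_{n,m}·∂₁q̃ + Φ_{n+1,m}·∂₂q̃ + Φ_{n,m+1}·∂₃q̃ + Φ_{n+1,m+1}·∂₄q̃, evaluated at (u_{n,m}, u_{n+1,m}, u_{n,m+1}, u_{n+1,m+1}), is nonzero. Hence the flow du_{n,m}/dσ₀ = u_{n,m} + α₀n is not a generalized symmetry of the lSKdV equation. -/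
/-- The transformed lSKdV quad polynomial
`q̃(a,b,c,d) = α₁ (a−c−β₀)(b−d−β₀) − α₂ (a−b−α₀)(c−d−α₀)`. -/
noncomputable def lSKdV_qt (α₁ α₂ α₀ β₀ a b c d : ℝ) : ℝ :=
  α₁ * (a - c - β₀) * (b - d - β₀) - α₂ * (a - b - α₀) * (c - d - α₀)

/-- there are parameters with `α₁β₀² = α₂α₀²`, `β₀ ≠ 0`, a solution `u`
of the transformed lSKdV equation, and a point `(n,m)`, at which the symmetry
determining expression of the characteristic `Φ_{n,m} = u_{n,m} + α₀ n` is nonzero: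
the flow `du_{n,m}/dσ₀ = u_{n,m} + α₀ n` is not a generalized symmetry of lSKdV. -/
theorem nonisospectral_flow_not_a_symmetry :
    ∃ (α₁ α₂ α₀ β₀ : ℝ) (u : ℤ × ℤ → ℝ) (n m : ℤ),
      α₁ * β₀ ^ 2 = α₂ * α₀ ^ 2 ∧ β₀ ≠ 0 ∧
      (∀ n m : ℤ,
        lSKdV_qt α₁ α₂ α₀ β₀ (u (n, m)) (u (n + 1, m)) (u (n, m + 1))
          (u (n + 1, m + 1)) = 0) ∧
      (u (n, m) + α₀ * (n : ℝ)) *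
          deriv (fun t => lSKdV_qt α₁ α₂ α₀ β₀ t (u (n + 1, m)) (u (n, m + 1))
            (u (n + 1, m + 1))) (u (n, m)) +
        (u (n + 1, m) + α₀ * ((n : ℝ) + 1)) *
          deriv (fun t => lSKdV_qt α₁ α₂ α₀ β₀ (u (n, m)) t (u (n, m + 1))
            (u (n + 1, m + 1))) (u (n + 1, m)) +
        (u (n, m + 1) + α₀ * (n : ℝ)) *
          deriv (fun t => lSKdV_qt α₁ α₂ α₀ β₀ (u (n, m)) (u (n + 1, m)) t
            (u (n + 1, m + 1))) (u (n, m + 1)) +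
        (u (n + 1, m + 1) + α₀ * ((n : ℝ) + 1)) *
          deriv (fun t => lSKdV_qt α₁ α₂ α₀ β₀ (u (n, m)) (u (n + 1, m)) (u (n, m + 1)) t)
            (u (n + 1, m + 1)) ≠ 0 := by
  refine ⟨1, 1, 1, 1, fun _ => 0, 0, 0, by norm_num, by norm_num,
    fun n m => by simp [lSKdV_qt], ?_⟩
  have h1 : (fun t => lSKdV_qt 1 1 1 1 t 0 0 0) = fun _ : ℝ => (0 : ℝ) := by
    funext t; simp [lSKdV_qt]
  have h2 : (fun t => lSKdV_qt 1 1 1 1 0 t 0 0) = fun t : ℝ => -2 * t := by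
    funext t; simp [lSKdV_qt]; ring
  have h3 : (fun t => lSKdV_qt 1 1 1 1 0 0 t 0) = fun t : ℝ => 2 * t := by
    funext t; simp [lSKdV_qt]; ring
  have h4 : (fun t => lSKdV_qt 1 1 1 1 0 0 0 t) = fun _ : ℝ => (0 : ℝ) := by
    funext t; simp [lSKdV_qt]
  have d2 : deriv (fun t : ℝ => -2 * t) 0 = -2 := by
    rw [show (fun t : ℝ => -2 * t) = fun t : ℝ => t * -2 by funext t; ring]
    simp [deriv_mul_const_field]
  have d3 : deriv (fun t : ℝ => 2 * t) 0 = 2 := by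
    rw [show (fun t : ℝ => 2 * t) = fun t : ℝ => t * 2 by funext t; ring]
    simp [deriv_mul_const_field]
  rw [h1, h2, h3, h4, d2, d3]
  norm_num
end
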